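/- Let λ = δ_1 + δ_2 + ... + δ_l with l ≤ n and let x be an indeterminate. Then (1/D_0) Σ_{w∈W} (−1)^{ℓ(w)} w( e^{λ+ρ_0} ∏_{i=1}^n (1 + x e^{−δ_i}) ) = Σ_{j=0}^l x^{l−j} χ_j, where χ_j is the irreducible sp(2n)-character of highest weight δ_1 + ... + δ_j and D_0 = Σ_{w∈W} (−1)^{ℓ(w)} w(e^{ρ_0}). -/

import Mathlib

noncomputable section

/-- The Weyl group of `sp(2n)` as signed permutations: a permutation together with a
sign pattern. -/
abbrev Wgrp (n : ℕ) := Equiv.Perm (Fin n) × (Fin n → Bool)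

/-- Action of a signed permutation on the weight lattice `ℤδ₁ ⊕ … ⊕ ℤδₙ`. -/
def wAct (n : ℕ) (w : Wgrp n) (mu : Fin n → ℤ) : Fin n → ℤ :=
  fun i => if w.2 i then -(mu (w.1⁻¹ i)) else mu (w.1⁻¹ i)

/-- `(−1)^{ℓ(w)}` for a signed permutation: the determinant `sign(σ)·(−1)^{#signs}`. -/
def sgn (n : ℕ) (w : Wgrp n) : ℤ :=
  (Equiv.Perm.sign w.1 : ℤ) * (-1) ^ (Finset.univ.filter (fun i => w.2 i = true)).card

/-- `ρ₀ = Σ_{i=1}^n (n−i+1) δᵢ` (0-based: `ρ₀ i = n − i`). -/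
def rho0 (n : ℕ) : Fin n → ℤ := fun i => (n : ℤ) - i

/-- `δᵢ` as a lattice vector. -/
def delta (n : ℕ) (i : Fin n) : Fin n → ℤ := Pi.single i 1

/-- The group algebra over `ℤ[x]` of the weight lattice of `sp(2n)`. -/
abbrev GA (n : ℕ) := AddMonoidAlgebra (Polynomial ℤ) (Fin n → ℤ)

/-- The fundamental weight `ω_j = δ₁ + … + δ_j`. -/
def omegaWt (n : ℕ) (j : ℕ) : Fin n → ℤ := fun i => if (i : ℕ) < j then 1 else 0

/-- The Weyl numerator `N_j = Σ_{w∈W} (−1)^{ℓ(w)} e^{w(ω_j+ρ₀)}`, so that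
`χ_j = N_j / D₀` by the Weyl character formula. -/
def weylNum (n : ℕ) (j : ℕ) : GA n :=
  ∑ w : Wgrp n, sgn n w •
    (AddMonoidAlgebra.single (wAct n w (omegaWt n j + rho0 n)) 1 : GA n)

/-! ### Auxiliary definitions and lemmas -/

/-- The alternating Weyl sum attached to a weight `μ` with coefficient `c`. -/
def Asum (n : ℕ) (μ : Fin n → ℤ) (c : Polynomial ℤ) : GA n :=
  ∑ w : Wgrp n, sgn n w • (AddMonoidAlgebra.single (wAct n w μ) c : GA n)

/-- `μ_S = ω_l + ρ₀ − Σ_{i∈S} δᵢ`. -/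
def muS (n l : ℕ) (S : Finset (Fin n)) : Fin n → ℤ :=
  fun i => omegaWt n l i + rho0 n i - (if i ∈ S then 1 else 0)

/-- The "good" subset `{i : j ≤ i < l}`. -/
def Sgood (n l j : ℕ) : Finset (Fin n) :=
  Finset.univ.filter (fun i => j ≤ (i : ℕ) ∧ (i : ℕ) < l)

lemma pow_filter_eq_prod (n : ℕ) (b : Fin n → Bool) :
    ((-1 : ℤ) ^ (Finset.univ.filter (fun i => b i = true)).card) =
      ∏ i : Fin n, (if b i then (-1 : ℤ) else 1) := by
  rw [← Finset.prod_filter_mul_prod_filter_not Finset.univ (fun i => b i = true)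
    (fun i => if b i then (-1 : ℤ) else 1)]
  have e1 : ∏ i ∈ Finset.univ.filter (fun i : Fin n => b i = true),
      (if b i then (-1 : ℤ) else 1) =
        (-1 : ℤ) ^ (Finset.univ.filter (fun i : Fin n => b i = true)).card := by
    rw [Finset.prod_congr rfl (g := fun _ => (-1 : ℤ)) (fun i hi => by
      simp only [Finset.mem_filter] at hi; simp [hi.2])]
    exact Finset.prod_const _
  have e2 : ∏ i ∈ Finset.univ.filter (fun i : Fin n => ¬ b i = true),
      (if b i then (-1 : ℤ) else 1) = 1 := by
    apply Finset.prod_eq_one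
    intro i hi
    simp only [Finset.mem_filter] at hi
    simp [hi.2]
  rw [e1, e2, mul_one]

lemma sgn_flip (n : ℕ) (w : Wgrp n) (k : Fin n) :
    sgn n (w.1, Function.update w.2 k (!w.2 k)) = - sgn n w := by
  unfold sgn
  simp only
  rw [pow_filter_eq_prod, pow_filter_eq_prod]
  have key : (fun i => if Function.update w.2 k (!w.2 k) i then (-1 : ℤ) else 1)
      = Function.update (fun i => if w.2 i then (-1 : ℤ) else 1) k
          (if !w.2 k then (-1 : ℤ) else 1) := by
    funext i
    by_cases hik : i = k
    · subst hik; simp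
    · simp [Function.update_of_ne hik]
  have h1 : ∏ i : Fin n, (if Function.update w.2 k (!w.2 k) i then (-1:ℤ) else 1)
      = (if !w.2 k then (-1:ℤ) else 1) *
          ∏ i ∈ Finset.univ \ {k}, (if w.2 i then (-1:ℤ) else 1) := by
    rw [show (∏ i : Fin n, (if Function.update w.2 k (!w.2 k) i then (-1:ℤ) else 1))
        = ∏ i : Fin n, Function.update (fun i => if w.2 i then (-1 : ℤ) else 1) k
            (if !w.2 k then (-1 : ℤ) else 1) i from by rw [← key]]
    exact Finset.prod_update_of_mem (Finset.mem_univ k) _ _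
  have h2 : ∏ i : Fin n, (if w.2 i then (-1:ℤ) else 1)
      = (if w.2 k then (-1:ℤ) else 1) *
          ∏ i ∈ Finset.univ \ {k}, (if w.2 i then (-1:ℤ) else 1) := by
    rw [Finset.sdiff_singleton_eq_erase]
    exact (Finset.mul_prod_erase _ _ (Finset.mem_univ k)).symm
  rw [h1, h2]
  cases hwk : w.2 k <;> simp [hwk] <;> ring

lemma Asum_zero (n : ℕ) (μ : Fin n → ℤ) (c : Polynomial ℤ) (k : Fin n) (hk : μ k = 0) :
    Asum n μ c = 0 := by
  unfold Asum
  apply Finset.sum_ninvolution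
    (g := fun (w : Wgrp n) => (w.1, Function.update w.2 (w.1 k) (!w.2 (w.1 k))))
  · intro w
    have hact : wAct n (w.1, Function.update w.2 (w.1 k) (!w.2 (w.1 k))) μ = wAct n w μ := by
      funext i
      unfold wAct
      simp only
      by_cases hik : i = w.1 k
      · subst hik
        have hki : w.1⁻¹ (w.1 k) = k := by simp
        rw [hki, hk]
        simp
      · rw [Function.update_of_ne hik]
    rw [hact, sgn_flip, neg_smul]
    abel
  · intro w _ h
    have h2 := congrFun (congrArg Prod.snd h) (w.1 k)
    simp at h2
  · intro w; exact Finset.mem_univ _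
  · intro w
    refine Prod.ext rfl ?_
    simp only
    funext i
    by_cases hik : i = w.1 k
    · subst hik; simp
    · simp [Function.update_of_ne hik]

lemma Asum_swap (n : ℕ) (μ : Fin n → ℤ) (c : Polynomial ℤ) (k k' : Fin n)
    (hkk : k ≠ k') (hμ : μ k = μ k') : Asum n μ c = 0 := by
  unfold Asum
  apply Finset.sum_ninvolution (g := fun (w : Wgrp n) => (w.1 * Equiv.swap k k', w.2))
  · intro w
    have hact : wAct n (w.1 * Equiv.swap k k', w.2) μ = wAct n w μ := by
      funext i
      unfold wAct
      simp only [mul_inv_rev, Equiv.Perm.coe_mul, Function.comp_apply, Equiv.swap_inv]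
      have : μ (Equiv.swap k k' (w.1⁻¹ i)) = μ (w.1⁻¹ i) := by
        rcases eq_or_ne (w.1⁻¹ i) k with h | h
        · rw [h, Equiv.swap_apply_left, hμ]
        · rcases eq_or_ne (w.1⁻¹ i) k' with h' | h'
          · rw [h', Equiv.swap_apply_right, hμ]
          · rw [Equiv.swap_apply_of_ne_of_ne h h']
      rw [this]
    have hsgn : sgn n (w.1 * Equiv.swap k k', w.2) = - sgn n w := by
      unfold sgn
      simp only [map_mul]
      rw [Equiv.Perm.sign_swap hkk]
      push_cast
      ring
    rw [hact, hsgn, neg_smul]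
    abel
  · intro w _ h
    have h1 := congrArg Prod.fst h
    simp only at h1
    have hsw : (Equiv.swap k k' : Equiv.Perm (Fin n)) = 1 :=
      mul_left_cancel (a := w.1) (by rw [mul_one]; exact h1)
    have hk2 := congrArg (fun (e : Equiv.Perm (Fin n)) => e k) hsw
    simp [Equiv.swap_apply_left] at hk2
    exact hkk hk2.symm
  · intro w; exact Finset.mem_univ _
  · intro w
    refine Prod.ext ?_ rfl
    simp only
    rw [mul_assoc, Equiv.swap_mul_self, mul_one]

lemma upclosed_eq_Ico (l : ℕ) (V : Finset ℕ) (hub : ∀ m ∈ V, m < l)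
    (hcl : ∀ m ∈ V, ∀ m', m < m' → m' < l → m' ∈ V) :
    V = Finset.Ico (l - V.card) l := by
  induction l generalizing V with
  | zero =>
    have : V = ∅ := Finset.eq_empty_of_forall_notMem (fun m hm => Nat.not_lt_zero m (hub m hm))
    simp [this]
  | succ l ih =>
    by_cases hlV : l ∈ V
    · have hV : V = insert l (V.erase l) := (Finset.insert_erase hlV).symm
      have h1 : ∀ m ∈ V.erase l, m < l := by
        intro m hm
        rcases Finset.mem_erase.mp hm with ⟨hne, hmV⟩
        exact lt_of_le_of_ne (Nat.lt_succ_iff.mp (hub m hmV)) hne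
      have h2 : ∀ m ∈ V.erase l, ∀ m', m < m' → m' < l → m' ∈ V.erase l := by
        intro m hm m' hmm' hm'l
        exact Finset.mem_erase.mpr ⟨Nat.ne_of_lt hm'l,
          hcl m (Finset.mem_of_mem_erase hm) m' hmm' (Nat.lt_succ_of_lt hm'l)⟩
      have hrec := ih (V.erase l) h1 h2
      have hcard : V.card = (V.erase l).card + 1 := by
        rw [Finset.card_erase_of_mem hlV]
        have := Finset.card_pos.mpr ⟨l, hlV⟩
        omega
      have hcle : (V.erase l).card ≤ l := by
        have : V.erase l ⊆ Finset.Ico 0 l := by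
          intro m hm; simp [h1 m hm]
        calc (V.erase l).card ≤ (Finset.Ico 0 l).card := Finset.card_le_card this
        _ = l := by simp
      have hmem : ∀ m, m ∈ V ↔ (m = l ∨ (l - (V.erase l).card ≤ m ∧ m < l)) := by
        intro m
        conv_lhs => rw [hV]
        rw [Finset.mem_insert]
        conv_lhs => rw [hrec]
        rw [Finset.mem_Ico]
      ext m
      rw [hmem, Finset.mem_Ico, hcard]
      omega
    · have hV : ∀ m ∈ V, False := by
        intro m hm
        rcases Nat.lt_succ_iff_lt_or_eq.mp (hub m hm) with h | h
        · exact hlV (hcl m hm l h (Nat.lt_succ_self l))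
        · exact hlV (h ▸ hm)
      have : V = ∅ := Finset.eq_empty_of_forall_notMem (fun m hm => hV m hm)
      simp [this]

lemma image_Sgood (n l j : ℕ) (hj : j ≤ l) (hl : l ≤ n) :
    (Sgood n l j).image Fin.val = Finset.Ico j l := by
  ext m
  simp only [Finset.mem_image, Sgood, Finset.mem_filter, Finset.mem_univ, true_and,
    Finset.mem_Ico]
  constructor
  · rintro ⟨i, ⟨h1, h2⟩, rfl⟩; exact ⟨h1, h2⟩
  · rintro ⟨h1, h2⟩; exact ⟨⟨m, lt_of_lt_of_le h2 hl⟩, ⟨h1, h2⟩, rfl⟩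

lemma card_Sgood (n l j : ℕ) (hj : j ≤ l) (hl : l ≤ n) :
    (Sgood n l j).card = l - j := by
  rw [← Finset.card_image_of_injective (Sgood n l j) Fin.val_injective,
    image_Sgood n l j hj hl, Nat.card_Ico]

lemma mu_Sgood (n l j : ℕ) (hj : j ≤ l) :
    muS n l (Sgood n l j) = omegaWt n j + rho0 n := by
  funext i
  simp only [muS, omegaWt, rho0, Sgood, Finset.mem_filter, Finset.mem_univ, true_and,
    Pi.add_apply]
  split_ifs <;> omega

lemma classify (n l : ℕ) (hl : l ≤ n) (S : Finset (Fin n))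
    (hz : ∀ k, muS n l S k ≠ 0)
    (hc : ∀ k k', k ≠ k' → muS n l S k ≠ muS n l S k') :
    S = Sgood n l (l - S.card) := by
  have base : ∀ i : Fin n, i.1 + 1 = n → l ≤ i.1 → i ∉ S := by
    intro i hi hli hiS
    apply hz i
    simp only [muS, omegaWt, rho0, if_neg (Nat.not_lt.mpr hli), if_pos hiS]
    omega
  have C1aux : ∀ m, ∀ i : Fin n, i.1 + m + 1 = n → l ≤ i.1 → i ∉ S := by
    intro m
    induction m with
    | zero => intro i hi; exact base i (by omega)
    | succ m ih =>
      intro i hi hli hiS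
      have hi1 : i.1 + 1 < n := by omega
      set i' : Fin n := ⟨i.1 + 1, hi1⟩ with hi'
      have hi'S : i' ∉ S := ih i' (by simp [hi']; omega) (by simp [hi']; omega)
      apply hc i i' (by intro h; rw [Fin.ext_iff] at h; simp [hi'] at h)
      simp only [muS, omegaWt, rho0, if_pos hiS, if_neg hi'S, hi',
        if_neg (show (⟨i.1 + 1, hi1⟩ : Fin n) ∉ S from hi'S)]
      rw [if_neg (by simp; omega), if_neg (by simp; omega)]
      push_cast
      ring
  have C1 : ∀ i : Fin n, l ≤ i.1 → i ∉ S := by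
    intro i hli
    exact C1aux (n - i.1 - 1) i (by omega) hli
  have C2 : ∀ i : Fin n, i ∈ S → ∀ h : i.1 + 1 < l,
      (⟨i.1 + 1, lt_of_lt_of_le h hl⟩ : Fin n) ∈ S := by
    intro i hiS h
    by_contra hnot
    apply hc i ⟨i.1 + 1, lt_of_lt_of_le h hl⟩ (by intro hh; have := congrArg Fin.val hh; simp at this)
    simp only [muS, omegaWt, rho0, if_pos hiS, if_neg hnot]
    rw [if_pos (by omega), if_pos (by omega)]
    push_cast
    ring
  set V : Finset ℕ := S.image Fin.val with hV
  have hub : ∀ m ∈ V, m < l := by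
    intro m hm
    rw [hV, Finset.mem_image] at hm
    obtain ⟨i, hiS, rfl⟩ := hm
    by_contra hge
    exact C1 i (Nat.not_lt.mp hge) hiS
  have hstep : ∀ d m, m ∈ V → m + d < l → m + d ∈ V := by
    intro d
    induction d with
    | zero => intro m hm _; simpa using hm
    | succ d ih =>
      intro m hm hlt
      have hmd : m + d ∈ V := ih m hm (by omega)
      rw [hV, Finset.mem_image] at hmd
      obtain ⟨i, hiS, hival⟩ := hmd
      have h2 : i.1 + 1 < l := by omega
      have := C2 i hiS h2
      rw [hV, Finset.mem_image]
      exact ⟨⟨i.1 + 1, lt_of_lt_of_le h2 hl⟩, this, by simp; omega⟩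
  have hcl : ∀ m ∈ V, ∀ m', m < m' → m' < l → m' ∈ V := by
    intro m hm m' hmm' hm'l
    have := hstep (m' - m) m hm (by omega)
    rwa [show m + (m' - m) = m' by omega] at this
  have hVcard : V.card = S.card := Finset.card_image_of_injective S Fin.val_injective
  have hIco := upclosed_eq_Ico l V hub hcl
  ext i
  simp only [Sgood, Finset.mem_filter, Finset.mem_univ, true_and]
  have : i ∈ S ↔ i.1 ∈ V := by
    rw [hV, Finset.mem_image]
    constructor
    · intro h; exact ⟨i, h, rfl⟩
    · rintro ⟨i', hi', hval⟩
      rwa [Fin.val_injective hval] at hi'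
  rw [this, hIco, hVcard, Finset.mem_Ico]

lemma expand (n l : ℕ) :
    (AddMonoidAlgebra.single (omegaWt n l + rho0 n) 1 : GA n) *
      ∏ i : Fin n, (1 + AddMonoidAlgebra.single (-(delta n i)) (Polynomial.X : Polynomial ℤ)) =
    ∑ S ∈ (Finset.univ : Finset (Fin n)).powerset,
      AddMonoidAlgebra.single (muS n l S) ((Polynomial.X : Polynomial ℤ) ^ S.card) := by
  have h1 : ∀ i : Fin n,
      (1 + AddMonoidAlgebra.single (-(delta n i)) (Polynomial.X : Polynomial ℤ) : GA n)
        = AddMonoidAlgebra.single (-(delta n i)) (Polynomial.X : Polynomial ℤ) + 1 :=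
    fun i => add_comm _ _
  rw [Finset.prod_congr rfl (fun i _ => h1 i)]
  rw [Finset.prod_add]
  rw [Finset.mul_sum]
  apply Finset.sum_congr rfl
  intro S hS
  rw [Finset.prod_const_one, mul_one, AddMonoidAlgebra.prod_single, Finset.prod_const,
    AddMonoidAlgebra.single_mul_single, one_mul]
  congr 1
  funext k
  simp only [Pi.add_apply, Finset.sum_apply, Pi.neg_apply, delta, muS, omegaWt, rho0]
  rw [Finset.sum_neg_distrib]
  rw [Finset.sum_pi_single]
  split_ifs <;> ring

lemma Asum_eq_smul_weylNum (n j m : ℕ) :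
    Asum n (omegaWt n j + rho0 n) ((Polynomial.X : Polynomial ℤ) ^ m) =
      (Polynomial.X : Polynomial ℤ) ^ m • weylNum n j := by
  unfold Asum weylNum
  rw [Finset.smul_sum]
  apply Finset.sum_congr rfl
  intro w _
  rw [AddMonoidAlgebra.smul_single, AddMonoidAlgebra.smul_single, AddMonoidAlgebra.smul_single]
  congr 1
  simp [zsmul_eq_mul]
  ring

/-- for `λ = δ₁ + … + δ_l` (`l ≤ n`),
`(1/D₀) Σ_{w∈W} (−1)^{ℓ(w)} w(e^{λ+ρ₀} ∏ᵢ(1 + x e^{−δᵢ})) = Σ_{j=0}^l x^{l−j} χ_j`,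
stated equivalently (multiplying through by the Weyl denominator `D₀` and using
`χ_j D₀ = N_j`) as an identity in the group algebra over `ℤ[x]`. -/
theorem weyl_sum_eq_chi (n l : ℕ) (hl : l ≤ n) :
    ∑ w : Wgrp n, sgn n w •
      AddMonoidAlgebra.mapDomain (wAct n w)
        ((AddMonoidAlgebra.single (omegaWt n l + rho0 n) 1 : GA n) *
          ∏ i : Fin n,
            (1 + AddMonoidAlgebra.single (-(delta n i)) (Polynomial.X : Polynomial ℤ))) =
      ∑ j ∈ Finset.range (l + 1), (Polynomial.X : Polynomial ℤ) ^ (l - j) • weylNum n j := by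
  classical
  have step1 : ∀ w : Wgrp n,
      AddMonoidAlgebra.mapDomain (wAct n w)
        ((AddMonoidAlgebra.single (omegaWt n l + rho0 n) 1 : GA n) *
          ∏ i : Fin n,
            (1 + AddMonoidAlgebra.single (-(delta n i)) (Polynomial.X : Polynomial ℤ)))
        = ∑ S ∈ (Finset.univ : Finset (Fin n)).powerset,
            (AddMonoidAlgebra.single (wAct n w (muS n l S))
              ((Polynomial.X : Polynomial ℤ) ^ S.card) : GA n) := by
    intro w
    have hsum := map_sum (⟨⟨AddMonoidAlgebra.mapDomain (R := Polynomial ℤ) (wAct n w),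
      AddMonoidAlgebra.mapDomain_zero _⟩, AddMonoidAlgebra.mapDomain_add _⟩ : GA n →+ GA n)
      (fun S => (AddMonoidAlgebra.single (muS n l S)
        ((Polynomial.X : Polynomial ℤ) ^ S.card) : GA n)) (Finset.univ : Finset (Fin n)).powerset
    rw [expand n l]
    exact hsum.trans (Finset.sum_congr rfl (fun S _ => AddMonoidAlgebra.mapDomain_single))
  calc
    ∑ w : Wgrp n, sgn n w •
        AddMonoidAlgebra.mapDomain (wAct n w)
          ((AddMonoidAlgebra.single (omegaWt n l + rho0 n) 1 : GA n) *
            ∏ i : Fin n,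
              (1 + AddMonoidAlgebra.single (-(delta n i)) (Polynomial.X : Polynomial ℤ)))
      = ∑ w : Wgrp n, ∑ S ∈ (Finset.univ : Finset (Fin n)).powerset,
          sgn n w • (AddMonoidAlgebra.single (wAct n w (muS n l S))
            ((Polynomial.X : Polynomial ℤ) ^ S.card) : GA n) := by
        refine Finset.sum_congr rfl (fun w _ => ?_)
        rw [step1 w, Finset.smul_sum]
    _ = ∑ S ∈ (Finset.univ : Finset (Fin n)).powerset,
          Asum n (muS n l S) ((Polynomial.X : Polynomial ℤ) ^ S.card) := by
        rw [Finset.sum_comm]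
        rfl
    _ = ∑ j ∈ Finset.range (l + 1), (Polynomial.X : Polynomial ℤ) ^ (l - j) • weylNum n j := by
        set G : Finset (Finset (Fin n)) :=
          (Finset.range (l + 1)).image (fun j => Sgood n l j) with hG
        have hsub : G ⊆ (Finset.univ : Finset (Fin n)).powerset :=
          fun S _ => Finset.mem_powerset.2 (Finset.subset_univ S)
        have hvanish : ∀ S ∈ (Finset.univ : Finset (Fin n)).powerset, S ∉ G →
            Asum n (muS n l S) ((Polynomial.X : Polynomial ℤ) ^ S.card) = 0 := by
          intro S _ hSG
          by_cases hz : ∃ k, muS n l S k = 0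
          · obtain ⟨k, hk⟩ := hz
            exact Asum_zero n _ _ k hk
          by_cases hc : ∃ k k', k ≠ k' ∧ muS n l S k = muS n l S k'
          · obtain ⟨k, k', hkk, he⟩ := hc
            exact Asum_swap n _ _ k k' hkk he
          push_neg at hz hc
          exfalso
          apply hSG
          rw [hG, Finset.mem_image]
          exact ⟨l - S.card, Finset.mem_range.2 (by omega),
            (classify n l hl S hz hc).symm⟩
        rw [← Finset.sum_subset hsub hvanish]
        rw [hG, Finset.sum_image (fun j hj j' hj' hEq => by
          have hjl : j ≤ l := by
            have := Finset.mem_range.1 hj; omega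
          have hjl' : j' ≤ l := by
            have := Finset.mem_range.1 hj'; omega
          have := congrArg Finset.card hEq
          rw [card_Sgood n l j hjl hl, card_Sgood n l j' hjl' hl] at this
          omega)]
        apply Finset.sum_congr rfl
        intro j hj
        have hjl : j ≤ l := by
          have := Finset.mem_range.1 hj; omega
        rw [card_Sgood n l j hjl hl, mu_Sgood n l j hjl, Asum_eq_smul_weylNum]
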